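/- Let Σ₀ and Σ₁ be positive semidefinite matrices in ℝ^{d×d} and let s ∈ {1,…,d}. Suppose σ²_min(Σ₀, s) > 0 and ‖Σ₁ − Σ₀‖_∞ ≤ σ²_min(Σ₀, s)/(32s), where ‖M‖_∞ denotes the entrywise maximum absolute value. Then σ²_min(Σ₁, s) ≥ σ²_min(Σ₀, s)/2. -/

import Mathlib

/-- The restricted minimum eigenvalue `σ²_min(M, s)` of a positive semidefinite matrix
`M ∈ ℝ^{d×d}` at sparsity level `s`: the infimum, over index sets `I` with `|I| ≤ s`
and vectors `β` with `β_I ≠ 0` and `‖β_{I^c}‖₁ ≤ 3‖β_I‖₁`, of `(βᵀMβ)/‖β_I‖₂²`. -/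
noncomputable def restrictedMinEigenvalueSq {d : ℕ} (M : Matrix (Fin d) (Fin d) ℝ) (s : ℕ) : ℝ :=
  sInf {v : ℝ | ∃ (I : Finset (Fin d)) (β : Fin d → ℝ),
    I.card ≤ s ∧ (∃ i ∈ I, β i ≠ 0) ∧
    (∑ i ∈ Iᶜ, |β i|) ≤ 3 * ∑ i ∈ I, |β i| ∧
    v = (∑ i, ∑ j, β i * M i j * β j) / (∑ i ∈ I, β i ^ 2)}

/-- **Stability of the restricted minimum eigenvalue under entrywise perturbation.**
If `S0, S1` are positive semidefinite, `σ²_min(S0, s) > 0` and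
`‖S1 − S0‖_∞ ≤ σ²_min(S0, s)/(32 s)` entrywise, then
`σ²_min(S1, s) ≥ σ²_min(S0, s)/2`. -/
lemma quad_eq {d : ℕ} (M : Matrix (Fin d) (Fin d) ℝ) (β : Fin d → ℝ) :
    ∑ i, ∑ j, β i * M i j * β j = dotProduct β (M.mulVec β) := by
  simp [dotProduct, Matrix.mulVec, Finset.mul_sum, mul_assoc]

theorem restrictedMinEigenvalueSq_stability {d : ℕ} (s : ℕ) (hs1 : 1 ≤ s) (hsd : s ≤ d)
    (S0 S1 : Matrix (Fin d) (Fin d) ℝ)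
    (h₀ : S0.PosSemidef) (h₁ : S1.PosSemidef)
    (hpos : 0 < restrictedMinEigenvalueSq S0 s)
    (hclose : ∀ i j, |S1 i j - S0 i j| ≤ restrictedMinEigenvalueSq S0 s / (32 * s)) :
    restrictedMinEigenvalueSq S1 s ≥ restrictedMinEigenvalueSq S0 s / 2 := by
  set σ := restrictedMinEigenvalueSq S0 s with hσ
  have hd : 0 < d := lt_of_lt_of_le hs1 hsd
  have hspos : (0:ℝ) < s := by exact_mod_cast hs1
  -- lower bound for the S0 set
  have hlb : ∀ v ∈ {v : ℝ | ∃ (I : Finset (Fin d)) (β : Fin d → ℝ),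
      I.card ≤ s ∧ (∃ i ∈ I, β i ≠ 0) ∧
      (∑ i ∈ Iᶜ, |β i|) ≤ 3 * ∑ i ∈ I, |β i| ∧
      v = (∑ i, ∑ j, β i * S0 i j * β j) / (∑ i ∈ I, β i ^ 2)}, (0:ℝ) ≤ v := by
    rintro v ⟨I, β, -, ⟨i0, hi0, hβ0⟩, -, rfl⟩
    have hQ : (0:ℝ) < ∑ i ∈ I, β i ^ 2 :=
      Finset.sum_pos' (fun i _ => sq_nonneg _) ⟨i0, hi0, by positivity⟩
    have hnum : (0:ℝ) ≤ ∑ i, ∑ j, β i * S0 i j * β j := by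
      rw [quad_eq]
      have := h₀.dotProduct_mulVec_nonneg β
      simpa using this
    positivity
  rw [ge_iff_le, restrictedMinEigenvalueSq]
  apply le_csInf
  · refine ⟨_, {⟨0, hd⟩}, Pi.single ⟨0, hd⟩ 1, by simpa using hs1,
      ⟨⟨0, hd⟩, Finset.mem_singleton_self _, by simp⟩, ?_, rfl⟩
    have : ∑ i ∈ ({⟨0, hd⟩} : Finset (Fin d))ᶜ, |Pi.single ⟨0, hd⟩ (1:ℝ) i| = 0 := by
      refine Finset.sum_eq_zero fun i hi => ?_
      simp only [Finset.mem_compl, Finset.mem_singleton] at hi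
      simp [Pi.single_apply, hi]
    rw [this]
    simp
  · rintro v ⟨I, β, hcard, ⟨i0, hi0, hβ0⟩, hcone, rfl⟩
    set Q := ∑ i ∈ I, β i ^ 2 with hQdef
    have hQ : (0:ℝ) < Q :=
      Finset.sum_pos' (fun i _ => sq_nonneg _) ⟨i0, hi0, by positivity⟩
    -- σ ≤ βᵀS0β/Q
    have hσle : σ ≤ (∑ i, ∑ j, β i * S0 i j * β j) / Q := by
      rw [hσ, restrictedMinEigenvalueSq]
      exact csInf_le ⟨0, hlb⟩ ⟨I, β, hcard, ⟨i0, hi0, hβ0⟩, hcone, rfl⟩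
    have h0ge : σ * Q ≤ ∑ i, ∑ j, β i * S0 i j * β j := by
      rw [le_div_iff₀ hQ] at hσle; linarith
    -- ℓ1 bound
    set A := ∑ i, |β i| with hAdef
    have hsplit : A = (∑ i ∈ Iᶜ, |β i|) + ∑ i ∈ I, |β i| := (Finset.sum_compl_add_sum I _).symm
    have hA4 : A ≤ 4 * ∑ i ∈ I, |β i| := by rw [hsplit]; linarith
    have hCS : (∑ i ∈ I, |β i|) ^ 2 ≤ (s:ℝ) * Q := by
      have := sq_sum_le_card_mul_sum_sq (s := I) (f := fun i => |β i|)
      have h2 : ∑ i ∈ I, |β i| ^ 2 = Q := by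
        simp [hQdef, sq_abs]
      calc (∑ i ∈ I, |β i|) ^ 2 ≤ (I.card : ℝ) * ∑ i ∈ I, |β i| ^ 2 := by exact_mod_cast this
        _ ≤ (s:ℝ) * Q := by
            rw [h2]
            exact mul_le_mul_of_nonneg_right (by exact_mod_cast hcard) hQ.le
    have hAnn : 0 ≤ A := Finset.sum_nonneg fun i _ => abs_nonneg _
    have hA2 : A ^ 2 ≤ 16 * (s:ℝ) * Q := by
      have h1 : A ^ 2 ≤ (4 * ∑ i ∈ I, |β i|) ^ 2 := by
        apply sq_le_sq' <;> nlinarith [Finset.sum_nonneg (fun i (_ : i ∈ I) => abs_nonneg (β i))]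
      nlinarith
    -- perturbation bound
    set ε := σ / (32 * s) with hεdef
    have hεnn : 0 ≤ ε := by positivity
    have hpert : |(∑ i, ∑ j, β i * S1 i j * β j) - ∑ i, ∑ j, β i * S0 i j * β j| ≤ ε * A ^ 2 := by
      have hdiff : (∑ i, ∑ j, β i * S1 i j * β j) - (∑ i, ∑ j, β i * S0 i j * β j)
          = ∑ i, ∑ j, β i * (S1 i j - S0 i j) * β j := by
        rw [← Finset.sum_sub_distrib]
        congr 1; ext i
        rw [← Finset.sum_sub_distrib]
        congr 1; ext j; ring
      rw [hdiff]
      calc |∑ i, ∑ j, β i * (S1 i j - S0 i j) * β j|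
          ≤ ∑ i, |∑ j, β i * (S1 i j - S0 i j) * β j| := Finset.abs_sum_le_sum_abs _ _
        _ ≤ ∑ i, ∑ j, |β i * (S1 i j - S0 i j) * β j| :=
            Finset.sum_le_sum fun i _ => Finset.abs_sum_le_sum_abs _ _
        _ ≤ ∑ i, ∑ j, |β i| * ε * |β j| := by
            refine Finset.sum_le_sum fun i _ => Finset.sum_le_sum fun j _ => ?_
            rw [abs_mul, abs_mul]
            exact mul_le_mul_of_nonneg_right
              (mul_le_mul_of_nonneg_left (hclose i j) (abs_nonneg _)) (abs_nonneg _)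
        _ = ε * A ^ 2 := by
            simp only [← Finset.sum_mul, ← Finset.mul_sum, hAdef]
            ring
    have hεA : ε * A ^ 2 ≤ σ * Q / 2 := by
      have h16 : ε * (16 * (s:ℝ) * Q) = σ * Q / 2 := by
        rw [hεdef]; field_simp; ring
      linarith [mul_le_mul_of_nonneg_left hA2 hεnn]
    have h1ge : σ * Q / 2 ≤ ∑ i, ∑ j, β i * S1 i j * β j := by
      have := abs_le.1 hpert
      linarith [this.1]
    rw [le_div_iff₀ hQ]
    linarith
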